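/- arXiv:1311.7125 — 4 statements merged into one kernel-verified Lean document; each statement's English description precedes it below -/
import Mathlib

section
/- For every exceptional representation X of the quiver Q1: at least one of hom(M,X), ext1(M,X), hom(M',X), ext1(M',X) is nonzero, and at least one of hom(X,M), ext1(X,M), hom(X,M'), ext1(X,M') is nonzero. (This is the 'additional RP property' for the Ext-nontrivial couple {M, M'} of Rep_k(Q1).) -/
noncomputable section

open Module

universe u

/-- A representation of the quiver `Q1` (vertices 1, 2, 3; arrows 1→3, 1→2, 2→3)
over the field `k`, with finite-dimensional vector spaces at the vertices. -/
structure RepQ1 (k : Type u) [Field k] where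
  V1 : Type u
  V2 : Type u
  V3 : Type u
  [acg1 : AddCommGroup V1]
  [acg2 : AddCommGroup V2]
  [acg3 : AddCommGroup V3]
  [mod1 : Module k V1]
  [mod2 : Module k V2]
  [mod3 : Module k V3]
  [fd1 : FiniteDimensional k V1]
  [fd2 : FiniteDimensional k V2]
  [fd3 : FiniteDimensional k V3]
  r13 : V1 →ₗ[k] V3
  r12 : V1 →ₗ[k] V2
  r23 : V2 →ₗ[k] V3

attribute [instance] RepQ1.acg1 RepQ1.acg2 RepQ1.acg3 RepQ1.mod1 RepQ1.mod2 RepQ1.mod3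
  RepQ1.fd1 RepQ1.fd2 RepQ1.fd3

namespace RepQ1

variable {k : Type u} [Field k]

/-- The space of morphisms of representations `ρ → ρ'`:
triples `(f₁, f₂, f₃)` of linear maps commuting with the structure maps. -/
def homSpace (ρ ρ' : RepQ1 k) :
    Submodule k ((ρ.V1 →ₗ[k] ρ'.V1) × (ρ.V2 →ₗ[k] ρ'.V2) × (ρ.V3 →ₗ[k] ρ'.V3)) where
  carrier := { f | f.2.2 ∘ₗ ρ.r13 = ρ'.r13 ∘ₗ f.1 ∧
                   f.2.1 ∘ₗ ρ.r12 = ρ'.r12 ∘ₗ f.1 ∧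
                   f.2.2 ∘ₗ ρ.r23 = ρ'.r23 ∘ₗ f.2.1 }
  add_mem' := by
    rintro f g ⟨h1, h2, h3⟩ ⟨h1', h2', h3'⟩
    refine ⟨?_, ?_, ?_⟩ <;>
      simp only [Prod.fst_add, Prod.snd_add, LinearMap.add_comp, LinearMap.comp_add,
        h1, h2, h3, h1', h2', h3']
  zero_mem' := by
    refine ⟨?_, ?_, ?_⟩ <;> simp
  smul_mem' := by
    rintro c f ⟨h1, h2, h3⟩
    refine ⟨?_, ?_, ?_⟩ <;>
      simp only [Prod.smul_fst, Prod.smul_snd, LinearMap.smul_comp, LinearMap.comp_smul,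
        h1, h2, h3]

/-- `hom ρ ρ'` is the `k`-dimension of the space of morphisms of representations `ρ → ρ'`. -/
def hom (ρ ρ' : RepQ1 k) : ℕ := finrank k (homSpace ρ ρ')

/-- The linear map `Φ` whose cokernel computes `Ext¹(ρ, ρ')`. -/
def phi (ρ ρ' : RepQ1 k) :
    ((ρ.V1 →ₗ[k] ρ'.V1) × (ρ.V2 →ₗ[k] ρ'.V2) × (ρ.V3 →ₗ[k] ρ'.V3)) →ₗ[k]
      ((ρ.V1 →ₗ[k] ρ'.V3) × (ρ.V1 →ₗ[k] ρ'.V2) × (ρ.V2 →ₗ[k] ρ'.V3)) where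
  toFun g := (g.2.2 ∘ₗ ρ.r13 - ρ'.r13 ∘ₗ g.1,
              g.2.1 ∘ₗ ρ.r12 - ρ'.r12 ∘ₗ g.1,
              g.2.2 ∘ₗ ρ.r23 - ρ'.r23 ∘ₗ g.2.1)
  map_add' g h := by
    refine Prod.ext ?_ (Prod.ext ?_ ?_) <;>
      · simp only [Prod.fst_add, Prod.snd_add, LinearMap.add_comp, LinearMap.comp_add]
        abel
  map_smul' c g := by
    refine Prod.ext ?_ (Prod.ext ?_ ?_) <;>
      simp [LinearMap.smul_comp, LinearMap.comp_smul, smul_sub]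

/-- `ext1 ρ ρ'` is the `k`-dimension of the cokernel of `Φ`; it equals
`dim Ext¹(ρ, ρ')` in the abelian category of representations of `Q1`. -/
def ext1 (ρ ρ' : RepQ1 k) : ℕ :=
  finrank k (((ρ.V1 →ₗ[k] ρ'.V3) × (ρ.V1 →ₗ[k] ρ'.V2) × (ρ.V2 →ₗ[k] ρ'.V3)) ⧸
    LinearMap.range (phi ρ ρ'))

/-- A representation is exceptional if `hom ρ ρ = 1` and `ext1 ρ ρ = 0`. -/
def IsExceptional (ρ : RepQ1 k) : Prop := hom ρ ρ = 1 ∧ ext1 ρ ρ = 0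

/-- Isomorphism of representations of `Q1`. -/
def Iso (ρ ρ' : RepQ1 k) : Prop :=
  ∃ (e1 : ρ.V1 ≃ₗ[k] ρ'.V1) (e2 : ρ.V2 ≃ₗ[k] ρ'.V2) (e3 : ρ.V3 ≃ₗ[k] ρ'.V3),
    e3.toLinearMap ∘ₗ ρ.r13 = ρ'.r13 ∘ₗ e1.toLinearMap ∧
    e2.toLinearMap ∘ₗ ρ.r12 = ρ'.r12 ∘ₗ e1.toLinearMap ∧
    e3.toLinearMap ∘ₗ ρ.r23 = ρ'.r23 ∘ₗ e2.toLinearMap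

end RepQ1

variable (k : Type u) [Field k]

/-- `π₊^m : k^{m+1} → k^m`, `(a₁,…,a_{m+1}) ↦ (a₁,…,a_m)`. -/
def piPlus (m : ℕ) : (Fin (m + 1) → k) →ₗ[k] (Fin m → k) :=
  LinearMap.funLeft k k Fin.castSucc

/-- `π₋^m : k^{m+1} → k^m`, `(a₁,…,a_{m+1}) ↦ (a₂,…,a_{m+1})`. -/
def piMinus (m : ℕ) : (Fin (m + 1) → k) →ₗ[k] (Fin m → k) :=
  LinearMap.funLeft k k Fin.succ

/-- `j₊^m : k^m → k^{m+1}`, `(a₁,…,a_m) ↦ (a₁,…,a_m,0)`. -/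
def jPlus (m : ℕ) : (Fin m → k) →ₗ[k] (Fin (m + 1) → k) where
  toFun a := Fin.snoc a 0
  map_add' a b := by
    ext i
    induction i using Fin.lastCases <;> simp
  map_smul' c a := by
    ext i
    induction i using Fin.lastCases <;> simp

/-- `j₋^m : k^m → k^{m+1}`, `(a₁,…,a_m) ↦ (0,a₁,…,a_m)`. -/
def jMinus (m : ℕ) : (Fin m → k) →ₗ[k] (Fin (m + 1) → k) where
  toFun a := Fin.cons 0 a
  map_add' a b := by
    ext i
    induction i using Fin.cases <;> simp
  map_smul' c a := by
    ext i
    induction i using Fin.cases <;> simp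

/-- The representation `E₁^m = (k^{m+1}, k^m, k^m)` with `ρ₁₃ = π₊^m`, `ρ₁₂ = π₋^m`, `ρ₂₃ = id`. -/
def E1 (m : ℕ) : RepQ1 k where
  V1 := Fin (m + 1) → k
  V2 := Fin m → k
  V3 := Fin m → k
  r13 := piPlus k m
  r12 := piMinus k m
  r23 := LinearMap.id

/-- The representation `E₂^m = (k^m, k^{m+1}, k^{m+1})` with `ρ₁₃ = j₊^m`, `ρ₁₂ = j₋^m`, `ρ₂₃ = id`. -/
def E2 (m : ℕ) : RepQ1 k where
  V1 := Fin m → k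
  V2 := Fin (m + 1) → k
  V3 := Fin (m + 1) → k
  r13 := jPlus k m
  r12 := jMinus k m
  r23 := LinearMap.id

/-- The representation `E₃^m = (k^m, k^m, k^{m+1})` with `ρ₁₃ = j₊^m`, `ρ₁₂ = id`, `ρ₂₃ = j₋^m`. -/
def E3 (m : ℕ) : RepQ1 k where
  V1 := Fin m → k
  V2 := Fin m → k
  V3 := Fin (m + 1) → k
  r13 := jPlus k m
  r12 := LinearMap.id
  r23 := jMinus k m

/-- The representation `E₄^m = (k^{m+1}, k^{m+1}, k^m)` with `ρ₁₃ = π₊^m`, `ρ₁₂ = id`, `ρ₂₃ = π₋^m`. -/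
def E4 (m : ℕ) : RepQ1 k where
  V1 := Fin (m + 1) → k
  V2 := Fin (m + 1) → k
  V3 := Fin m → k
  r13 := piPlus k m
  r12 := LinearMap.id
  r23 := piMinus k m

/-- The representation `M = (0, k, 0)` with zero structure maps. -/
def Mrep : RepQ1 k where
  V1 := Fin 0 → k
  V2 := Fin 1 → k
  V3 := Fin 0 → k
  r13 := 0
  r12 := 0
  r23 := 0

/-- The representation `M' = (k, 0, k)` with `ρ₁₃ = id` and the other structure maps zero. -/
def Mprep : RepQ1 k where
  V1 := Fin 1 → k
  V2 := Fin 0 → k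
  V3 := Fin 1 → k
  r13 := LinearMap.id
  r12 := 0
  r23 := 0

namespace RepQ1

variable {k : Type u} [Field k]

/-- An exceptional pair `(X, Y)`: both `X` and `Y` are exceptional and
`hom (Y, X) = 0` and `ext1 (Y, X) = 0`. -/
def IsExceptionalPair (X Y : RepQ1 k) : Prop :=
  X.IsExceptional ∧ Y.IsExceptional ∧ hom Y X = 0 ∧ ext1 Y X = 0

/-- An exceptional triple `(A, B, C)`: `(A,B)`, `(B,C)` and `(A,C)` are exceptional pairs. -/
def IsExceptionalTriple (A B C : RepQ1 k) : Prop :=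
  IsExceptionalPair A B ∧ IsExceptionalPair B C ∧ IsExceptionalPair A C

/-- A morphism of representations of `Q1`. -/
structure Homo (ρ ρ' : RepQ1 k) where
  f1 : ρ.V1 →ₗ[k] ρ'.V1
  f2 : ρ.V2 →ₗ[k] ρ'.V2
  f3 : ρ.V3 →ₗ[k] ρ'.V3
  comm13 : f3 ∘ₗ ρ.r13 = ρ'.r13 ∘ₗ f1
  comm12 : f2 ∘ₗ ρ.r12 = ρ'.r12 ∘ₗ f1
  comm23 : f3 ∘ₗ ρ.r23 = ρ'.r23 ∘ₗ f2

/-- `0 → A → C → B → 0` is a short exact sequence of representations of `Q1`: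
at each vertex the induced sequence of vector spaces is short exact. -/
def IsSES {A C B : RepQ1 k} (f : Homo A C) (g : Homo C B) : Prop :=
  Function.Injective f.f1 ∧ Function.Injective f.f2 ∧ Function.Injective f.f3 ∧
  Function.Surjective g.f1 ∧ Function.Surjective g.f2 ∧ Function.Surjective g.f3 ∧
  LinearMap.range f.f1 = LinearMap.ker g.f1 ∧
  LinearMap.range f.f2 = LinearMap.ker g.f2 ∧
  LinearMap.range f.f3 = LinearMap.ker g.f3

/-- A representation is zero when all its vector spaces are zero. -/
def IsZeroRep (ρ : RepQ1 k) : Prop :=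
  Subsingleton ρ.V1 ∧ Subsingleton ρ.V2 ∧ Subsingleton ρ.V3

end RepQ1

/-- The (vertexwise) direct sum of two representations of `Q1`. -/
def RepQ1.dsum {k : Type u} [Field k] (ρ σ : RepQ1 k) : RepQ1 k where
  V1 := ρ.V1 × σ.V1
  V2 := ρ.V2 × σ.V2
  V3 := ρ.V3 × σ.V3
  r13 := ρ.r13.prodMap σ.r13
  r12 := ρ.r12.prodMap σ.r12
  r23 := ρ.r23.prodMap σ.r23



/-- The Euler form identity: `hom - ext1` equals the Euler characteristic of dimensions. -/
lemma euler_eq {k : Type u} [Field k] (ρ ρ' : RepQ1 k) :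
    RepQ1.hom ρ ρ' +
      (finrank k ρ.V1 * finrank k ρ'.V3 + finrank k ρ.V1 * finrank k ρ'.V2 +
        finrank k ρ.V2 * finrank k ρ'.V3)
    = RepQ1.ext1 ρ ρ' +
      (finrank k ρ.V1 * finrank k ρ'.V1 + finrank k ρ.V2 * finrank k ρ'.V2 +
        finrank k ρ.V3 * finrank k ρ'.V3) := by
  have hker : RepQ1.homSpace ρ ρ' = LinearMap.ker (RepQ1.phi ρ ρ') := by
    ext f
    simp [RepQ1.homSpace, RepQ1.phi, LinearMap.mem_ker, Prod.ext_iff, sub_eq_zero,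
      Submodule.mem_mk, AddSubmonoid.mem_mk, AddSubsemigroup.mem_mk, Set.mem_setOf_eq]
  have h2 := LinearMap.finrank_range_add_finrank_ker (RepQ1.phi ρ ρ')
  have h3 := Submodule.finrank_quotient_add_finrank (LinearMap.range (RepQ1.phi ρ ρ'))
  have hdom : finrank k ((ρ.V1 →ₗ[k] ρ'.V1) × (ρ.V2 →ₗ[k] ρ'.V2) × (ρ.V3 →ₗ[k] ρ'.V3))
      = finrank k ρ.V1 * finrank k ρ'.V1 + finrank k ρ.V2 * finrank k ρ'.V2 +
        finrank k ρ.V3 * finrank k ρ'.V3 := by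
    simp [Module.finrank_prod, Module.finrank_linearMap, add_assoc]
  have hcod : finrank k ((ρ.V1 →ₗ[k] ρ'.V3) × (ρ.V1 →ₗ[k] ρ'.V2) × (ρ.V2 →ₗ[k] ρ'.V3))
      = finrank k ρ.V1 * finrank k ρ'.V3 + finrank k ρ.V1 * finrank k ρ'.V2 +
        finrank k ρ.V2 * finrank k ρ'.V3 := by
    simp [Module.finrank_prod, Module.finrank_linearMap, add_assoc]
  rw [hdom] at h2
  rw [hcod] at h3
  rw [RepQ1.hom, hker, RepQ1.ext1]
  omega

/-- The additional RP property for the Ext-nontrivial couple `{M, M'}` of `Rep_k(Q1)`. -/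
theorem statement_11 (k : Type u) [Field k] [IsAlgClosed k] (X : RepQ1 k)
    (hX : X.IsExceptional) :
    (RepQ1.hom (Mrep k) X ≠ 0 ∨ RepQ1.ext1 (Mrep k) X ≠ 0 ∨
      RepQ1.hom (Mprep k) X ≠ 0 ∨ RepQ1.ext1 (Mprep k) X ≠ 0) ∧
    (RepQ1.hom X (Mrep k) ≠ 0 ∨ RepQ1.ext1 X (Mrep k) ≠ 0 ∨
      RepQ1.hom X (Mprep k) ≠ 0 ∨ RepQ1.ext1 X (Mprep k) ≠ 0) := by
  obtain ⟨hX1, hX2⟩ := hX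
  set a := finrank k X.V1 with ha
  set b := finrank k X.V2 with hb
  set c := finrank k X.V3 with hc
  have hXX := euler_eq X X
  rw [hX1, hX2, ← ha, ← hb, ← hc] at hXX
  have d1 : finrank k (Mrep k).V1 = 0 := by simp [Mrep]; exact Module.finrank_fin_fun k
  have d2 : finrank k (Mrep k).V2 = 1 := by simp [Mrep]; exact Module.finrank_fin_fun k
  have d3 : finrank k (Mrep k).V3 = 0 := by simp [Mrep]; exact Module.finrank_fin_fun k
  have d1' : finrank k (Mprep k).V1 = 1 := by simp [Mprep]; exact Module.finrank_fin_fun k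
  have d2' : finrank k (Mprep k).V2 = 0 := by simp [Mprep]; exact Module.finrank_fin_fun k
  have d3' : finrank k (Mprep k).V3 = 1 := by simp [Mprep]; exact Module.finrank_fin_fun k
  constructor
  · by_contra h
    push_neg at h
    obtain ⟨h1, h2, h3, h4⟩ := h
    have e1 := euler_eq (Mrep k) X
    have e2 := euler_eq (Mprep k) X
    rw [h1, h2, d1, d2, d3, ← ha, ← hb, ← hc] at e1
    rw [h3, h4, d1', d2', d3', ← ha, ← hb, ← hc] at e2
    have hbc : b = c := by omega
    have hab : a = b := by omega
    rw [hab, hbc] at hXX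
    linarith
  · by_contra h
    push_neg at h
    obtain ⟨h1, h2, h3, h4⟩ := h
    have e1 := euler_eq X (Mrep k)
    have e2 := euler_eq X (Mprep k)
    rw [h1, h2, d1, d2, d3, ← ha, ← hb, ← hc] at e1
    rw [h3, h4, d1', d2', d3', ← ha, ← hb, ← hc] at e2
    have hab : a = b := by omega
    have hbc : b = c := by omega
    rw [hab, hbc] at hXX
    linarith
end
end

section
/- For every natural number m ≥ 1, there is no exceptional representation ρ of the quiver Q1 whose dimension vector (dim V_1, dim V_2, dim V_3) equals (m+1, m, m+1) or (m, m+1, m). -/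
noncomputable section

open Module

universe u

variable (k : Type u) [Field k]

section AuxLemmas

variable {k : Type u} [Field k] {V W : Type u}
  [AddCommGroup V] [AddCommGroup W] [Module k V] [Module k W]

/-- There is a nonzero functional vanishing on the range of `c` when `dim W < dim V`. -/
lemma aux_exists_functional [FiniteDimensional k V] [FiniteDimensional k W]
    (c : W →ₗ[k] V) (h : finrank k W < finrank k V) :
    ∃ ψ : V →ₗ[k] k, ψ ≠ 0 ∧ ψ ∘ₗ c = 0 := by
  have hlt : LinearMap.range c < ⊤ := by
    rcases lt_or_eq_of_le (le_top (a := LinearMap.range c)) with h' | h'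
    · exact h'
    · exfalso
      have := LinearMap.finrank_range_le c
      rw [h', finrank_top] at this
      omega
  obtain ⟨ψ, hψ, hmap⟩ := (LinearMap.range c).exists_dual_map_eq_bot_of_lt_top hlt inferInstance
  refine ⟨ψ, hψ, ?_⟩
  ext x
  have : ψ (c x) ∈ (LinearMap.range c).map ψ :=
    Submodule.mem_map_of_mem (LinearMap.mem_range_self c x)
  rw [hmap] at this
  simpa using this

lemma aux_exists_ker_vec [FiniteDimensional k V] [FiniteDimensional k W]
    (b : V →ₗ[k] W) (h : finrank k W < finrank k V) :
    ∃ v : V, v ≠ 0 ∧ b v = 0 := by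
  have : ¬ Function.Injective b := fun hi => by
    have := LinearMap.finrank_le_finrank_of_injective hi; omega
  rw [← LinearMap.ker_eq_bot] at this
  obtain ⟨v, hv, hv0⟩ := Submodule.exists_mem_ne_zero_of_ne_bot this
  exact ⟨v, hv0, hv⟩

lemma aux_smulRight_ne_zero {φ : V →ₗ[k] k} (hφ : φ ≠ 0) {w : W} (hw : w ≠ 0) :
    φ.smulRight w ≠ 0 := by
  obtain ⟨x, hx⟩ := DFunLike.ne_iff.mp hφ
  simp only [LinearMap.zero_apply] at hx
  intro h
  have := DFunLike.congr_fun h x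
  simp only [LinearMap.smulRight_apply, LinearMap.zero_apply] at this
  exact (smul_ne_zero hx hw) this

end AuxLemmas

/-- If `hom ρ ρ = 1` then every endomorphism of `ρ` is a scalar multiple of the identity. -/
lemma aux_eq_smul_id_of_hom_eq_one {k : Type u} [Field k] (ρ : RepQ1 k)
    [Nontrivial ρ.V2] (h1 : RepQ1.hom ρ ρ = 1)
    (f : (ρ.V1 →ₗ[k] ρ.V1) × (ρ.V2 →ₗ[k] ρ.V2) × (ρ.V3 →ₗ[k] ρ.V3))
    (hf : f ∈ RepQ1.homSpace ρ ρ) :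
    ∃ c : k, f.1 = c • LinearMap.id ∧ f.2.1 = c • LinearMap.id ∧ f.2.2 = c • LinearMap.id := by
  have hid : ((LinearMap.id : ρ.V1 →ₗ[k] ρ.V1), (LinearMap.id : ρ.V2 →ₗ[k] ρ.V2),
      (LinearMap.id : ρ.V3 →ₗ[k] ρ.V3)) ∈ RepQ1.homSpace ρ ρ := by
    refine ⟨?_, ?_, ?_⟩ <;> simp
  set I : RepQ1.homSpace ρ ρ := ⟨_, hid⟩ with hI
  have hIne : I ≠ 0 := by
    intro h
    have hval := congrArg Subtype.val h
    obtain ⟨x, hx⟩ := exists_ne (0 : ρ.V2)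
    have h2 := congrArg (fun z => z.2.1 x) hval
    simp only [hI, LinearMap.id_coe, id_eq, ZeroMemClass.coe_zero, Prod.snd_zero,
      Prod.fst_zero, LinearMap.zero_apply] at h2
    exact hx h2
  obtain ⟨c, hc⟩ := (finrank_eq_one_iff_of_nonzero' I hIne).mp h1 ⟨f, hf⟩
  have h' := congrArg Subtype.val hc
  simp only [hI, SetLike.mk_smul_mk] at h'
  rw [Prod.ext_iff, Prod.ext_iff] at h'
  exact ⟨c, h'.1.symm, h'.2.1.symm, h'.2.2.symm⟩

/-- Extract `c = 0` from `0 = c • id` on a nontrivial space. -/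
lemma aux_scalar_zero {k : Type u} [Field k] {V : Type u} [AddCommGroup V] [Module k V]
    [Nontrivial V] {c : k} (h : (0 : V →ₗ[k] V) = c • LinearMap.id) : c = 0 := by
  obtain ⟨x, hx⟩ := exists_ne (0 : V)
  have := DFunLike.congr_fun h x
  simp only [LinearMap.zero_apply, LinearMap.smul_apply, LinearMap.id_apply] at this
  rcases smul_eq_zero.mp this.symm with h' | h'
  · exact h'
  · exact absurd h' hx

/-- For `m ≥ 1`, no exceptional representation of `Q1` has dimension vector
`(m+1, m, m+1)` or `(m, m+1, m)`. -/
theorem statement_15 (k : Type u) [Field k] [IsAlgClosed k] (m : ℕ) (hm : 1 ≤ m)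
    (ρ : RepQ1 k) (hρ : ρ.IsExceptional) :
    ¬((finrank k ρ.V1 = m + 1 ∧ finrank k ρ.V2 = m ∧ finrank k ρ.V3 = m + 1) ∨
      (finrank k ρ.V1 = m ∧ finrank k ρ.V2 = m + 1 ∧ finrank k ρ.V3 = m)) := by
  obtain ⟨hhom, _⟩ := hρ
  rintro (⟨h1, h2, h3⟩ | ⟨h1, h2, h3⟩)
  · -- dimension vector (m+1, m, m+1)
    haveI : Nontrivial ρ.V2 := nontrivial_of_finrank_pos (R := k) (by omega : 0 < finrank k ρ.V2)
    haveI : Nontrivial ρ.V3 := nontrivial_of_finrank_pos (R := k) (by omega : 0 < finrank k ρ.V3)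
    obtain ⟨ψ, hψ, hψc⟩ := aux_exists_functional ρ.r23 (by omega)
    by_cases hψa : ψ ∘ₗ ρ.r13 = 0
    · obtain ⟨w, hw⟩ := exists_ne (0 : ρ.V3)
      have hf : ((0 : ρ.V1 →ₗ[k] ρ.V1), (0 : ρ.V2 →ₗ[k] ρ.V2), ψ.smulRight w) ∈
          RepQ1.homSpace ρ ρ := by
        refine ⟨?_, ?_, ?_⟩
        · ext x
          have hx := LinearMap.congr_fun hψa x
          simp only [LinearMap.comp_apply, LinearMap.zero_apply] at hx
          simp [hx]
        · ext x; simp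
        · ext x
          have hx := LinearMap.congr_fun hψc x
          simp only [LinearMap.comp_apply, LinearMap.zero_apply] at hx
          simp [hx]
      obtain ⟨c, _, hc2, hc3⟩ := aux_eq_smul_id_of_hom_eq_one ρ hhom _ hf
      rw [aux_scalar_zero hc2, zero_smul] at hc3
      exact aux_smulRight_ne_zero hψ hw hc3
    · obtain ⟨v, hv0, hbv⟩ := aux_exists_ker_vec ρ.r12 (by omega)
      have hf : ((ψ ∘ₗ ρ.r13).smulRight v, (0 : ρ.V2 →ₗ[k] ρ.V2),
          ψ.smulRight (ρ.r13 v)) ∈ RepQ1.homSpace ρ ρ := by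
        refine ⟨?_, ?_, ?_⟩
        · ext x; simp [map_smul]
        · ext x; simp [map_smul, hbv]
        · ext x
          have hx := LinearMap.congr_fun hψc x
          simp only [LinearMap.comp_apply, LinearMap.zero_apply] at hx
          simp [hx]
      obtain ⟨c, hc1, hc2, _⟩ := aux_eq_smul_id_of_hom_eq_one ρ hhom _ hf
      rw [aux_scalar_zero hc2, zero_smul] at hc1
      exact aux_smulRight_ne_zero hψa hv0 hc1
  · -- dimension vector (m, m+1, m)
    haveI : Nontrivial ρ.V1 := nontrivial_of_finrank_pos (R := k) (by omega : 0 < finrank k ρ.V1)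
    haveI : Nontrivial ρ.V2 := nontrivial_of_finrank_pos (R := k) (by omega : 0 < finrank k ρ.V2)
    obtain ⟨φ, hφ, hφb⟩ := aux_exists_functional ρ.r12 (by omega)
    obtain ⟨v, hv0, hcv⟩ := aux_exists_ker_vec ρ.r23 (by omega)
    have hf : ((0 : ρ.V1 →ₗ[k] ρ.V1), φ.smulRight v, (0 : ρ.V3 →ₗ[k] ρ.V3)) ∈
        RepQ1.homSpace ρ ρ := by
      refine ⟨?_, ?_, ?_⟩
      · ext x; simp
      · ext x
        have hx := LinearMap.congr_fun hφb x
        simp only [LinearMap.comp_apply, LinearMap.zero_apply] at hx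
        simp [hx]
      · ext x; simp [map_smul, hcv]
    obtain ⟨c, hc1, hc2, _⟩ := aux_eq_smul_id_of_hom_eq_one ρ hhom _ hf
    have hc0 : c = 0 := by
      obtain ⟨x, hx⟩ := exists_ne (0 : ρ.V1)
      have := DFunLike.congr_fun hc1 x
      simp only [LinearMap.zero_apply, LinearMap.smul_apply, LinearMap.id_apply] at this
      rcases smul_eq_zero.mp this.symm with h' | h'
      · exact h'
      · exact absurd h' hx
    rw [hc0, zero_smul] at hc2
    exact aux_smulRight_ne_zero hφ hv0 hc2
end
end

section
/- In the category of representations of the quiver Q1 there exist short exact sequences: 0 → E_2^{m−1} → E_1^m → E_1^0 ⊕ E_1^0 → 0 for every m ≥ 1; 0 → E_3^m → E_2^m → M → 0 for every m ≥ 0; 0 → E_3^{m−1} → E_4^m → E_4^0 ⊕ E_4^0 → 0 for every m ≥ 1; and 0 → M → E_4^m → E_1^m → 0 for every m ≥ 0. -/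
noncomputable section

open Module

universe u

variable (k : Type u) [Field k]

section SESAux

variable (k : Type u) [Field k]

@[simp] lemma piPlus_apply (m : ℕ) (a : Fin (m+1) → k) (i : Fin m) :
    piPlus k m a i = a i.castSucc := rfl

@[simp] lemma piMinus_apply (m : ℕ) (a : Fin (m+1) → k) (i : Fin m) :
    piMinus k m a i = a i.succ := rfl

@[simp] lemma jPlus_apply (m : ℕ) (a : Fin m → k) :
    jPlus k m a = Fin.snoc a 0 := rfl

@[simp] lemma jMinus_apply (m : ℕ) (a : Fin m → k) :
    jMinus k m a = Fin.cons 0 a := rfl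

/-- The reversal map `k^n → k^n`. -/
def revL (n : ℕ) : (Fin n → k) →ₗ[k] (Fin n → k) := LinearMap.funLeft k k Fin.rev

@[simp] lemma revL_apply (n : ℕ) (a : Fin n → k) (i : Fin n) : revL k n a i = a i.rev := rfl

lemma revL_revL (n : ℕ) (a : Fin n → k) : revL k n (revL k n a) = a := by
  funext i; simp

lemma revL_injective (n : ℕ) : Function.Injective (revL k n) :=
  Function.LeftInverse.injective (g := revL k n) (revL_revL k n)

lemma revL_surjective (n : ℕ) : Function.Surjective (revL k n) :=
  Function.RightInverse.surjective (revL_revL k n)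

lemma range_revL (n : ℕ) : LinearMap.range (revL k n) = ⊤ :=
  LinearMap.range_eq_top.mpr (revL_surjective k n)

/-- The map `a ↦ (0, a_n, …, a_1, 0)` from `k^n` to `k^{n+2}`. -/
def embL (n : ℕ) : (Fin n → k) →ₗ[k] (Fin (n+2) → k) :=
  jMinus k (n+1) ∘ₗ jPlus k n ∘ₗ revL k n

lemma embL_apply (n : ℕ) (a : Fin n → k) :
    embL k n a = Fin.cons 0 (Fin.snoc (fun j => a j.rev) 0) := rfl

lemma embL_injective (n : ℕ) : Function.Injective (embL k n) := by
  intro a b h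
  funext i
  have := congrFun h (i.rev.castSucc.succ)
  simpa [embL_apply, Fin.rev_rev] using this

lemma comm_plus (n : ℕ) :
    revL k (n+1) ∘ₗ jPlus k n = piPlus k (n+1) ∘ₗ embL k n := by
  refine LinearMap.ext fun a => funext fun i => ?_
  induction i using Fin.cases with
  | zero => simp [embL_apply]
  | succ j => simp [embL_apply, Fin.rev_succ, ← Fin.succ_castSucc]

lemma comm_minus (n : ℕ) :
    revL k (n+1) ∘ₗ jMinus k n = piMinus k (n+1) ∘ₗ embL k n := by
  refine LinearMap.ext fun a => funext fun i => ?_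
  induction i using Fin.lastCases with
  | last => simp [embL_apply, ← Fin.succ_last]
  | cast j => simp [embL_apply, Fin.rev_castSucc]

/-- The projection onto the `i`-th coordinate, viewed as map to `k^1`. -/
def cProj (n : ℕ) (i : Fin n) : (Fin n → k) →ₗ[k] (Fin 1 → k) :=
  LinearMap.pi fun _ => LinearMap.proj i

@[simp] lemma cProj_apply (n : ℕ) (i : Fin n) (x : Fin n → k) (j : Fin 1) :
    cProj k n i x j = x i := rfl

lemma cProj_surjective (n : ℕ) (i : Fin n) : Function.Surjective (cProj k n i) := by
  intro c
  refine ⟨fun _ => c 0, funext fun j => ?_⟩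
  rw [Subsingleton.elim j 0]
  rfl

/-- Projection onto the two extreme coordinates of `k^{n+2}`. -/
def projEnds (n : ℕ) : (Fin (n+2) → k) →ₗ[k] (Fin 1 → k) × (Fin 1 → k) :=
  (cProj k (n+2) 0).prod (cProj k (n+2) (Fin.last (n+1)))

lemma projEnds_surjective (n : ℕ) : Function.Surjective (projEnds k n) := by
  rintro ⟨c, d⟩
  have h0 : (Fin.last (n+1) : Fin (n+2)) ≠ 0 := by
    simp [Fin.ext_iff]
  refine ⟨fun i => if i = 0 then c 0 else if i = Fin.last (n+1) then d 0 else 0, ?_⟩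
  refine Prod.ext (funext fun j => ?_) (funext fun j => ?_) <;>
    rw [Subsingleton.elim j 0] <;> simp [projEnds, h0]

lemma range_embL (n : ℕ) :
    LinearMap.range (embL k n) = LinearMap.ker (projEnds k n) := by
  ext x
  simp only [LinearMap.mem_range, LinearMap.mem_ker]
  constructor
  · rintro ⟨a, rfl⟩
    refine Prod.ext (funext fun j => ?_) (funext fun j => ?_)
    · simp [projEnds, embL_apply]
    · show embL k n a (Fin.last (n+1)) = 0
      rw [embL_apply, ← Fin.succ_last, Fin.cons_succ, Fin.snoc_last]
  · intro hx
    have h0 : x 0 = 0 := congrFun (congrArg Prod.fst hx) 0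
    have hl : x (Fin.last (n+1)) = 0 := congrFun (congrArg Prod.snd hx) 0
    refine ⟨fun j => x (j.rev.succ.castSucc), ?_⟩
    funext i
    induction i using Fin.cases with
    | zero => simpa [embL_apply] using h0.symm
    | succ i' =>
      induction i' using Fin.lastCases with
      | last =>
        rw [embL_apply, Fin.cons_succ, Fin.snoc_last, Fin.succ_last]
        exact hl.symm
      | cast j =>
        simp only [embL_apply, ← Fin.succ_castSucc, Fin.cons_succ, Fin.snoc_castSucc,
          Fin.rev_rev]

lemma jMinus_injective (m : ℕ) : Function.Injective (jMinus k m) := by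
  intro a b h
  funext i
  simpa using congrFun h i.succ

lemma range_jMinus (m : ℕ) :
    LinearMap.range (jMinus k m) = LinearMap.ker (cProj k (m+1) 0) := by
  ext x
  simp only [LinearMap.mem_range, LinearMap.mem_ker]
  constructor
  · rintro ⟨a, rfl⟩
    funext j
    simp
  · intro hx
    have h0 : x 0 = 0 := congrFun hx 0
    refine ⟨fun j => x j.succ, ?_⟩
    funext i
    induction i using Fin.cases with
    | zero => simp [h0.symm]
    | succ j => simp

lemma piMinus_surjective (m : ℕ) : Function.Surjective (piMinus k m) := by
  intro y
  exact ⟨Fin.cons 0 y, funext fun i => by simp⟩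

/-- The map `k^1 → k^{m+1}` sending `c` to `(c, 0, …, 0)`. -/
def sing0 (m : ℕ) : (Fin 1 → k) →ₗ[k] (Fin (m+1) → k) :=
  (LinearMap.single k (fun _ : Fin (m+1) => k) 0) ∘ₗ LinearMap.proj 0

@[simp] lemma sing0_apply (m : ℕ) (c : Fin 1 → k) :
    sing0 k m c = Pi.single 0 (c 0) := rfl

lemma sing0_injective (m : ℕ) : Function.Injective (sing0 k m) := by
  intro a b h
  funext j
  rw [Subsingleton.elim j 0]
  simpa using congrFun h 0

lemma piMinus_sing0 (m : ℕ) : piMinus k m ∘ₗ sing0 k m = 0 := by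
  refine LinearMap.ext fun c => funext fun i => ?_
  simp [Pi.single_eq_of_ne (Fin.succ_ne_zero i)]

lemma range_sing0 (m : ℕ) :
    LinearMap.range (sing0 k m) = LinearMap.ker (piMinus k m) := by
  ext x
  simp only [LinearMap.mem_range, LinearMap.mem_ker]
  constructor
  · rintro ⟨c, rfl⟩
    funext i
    simp [Pi.single_eq_of_ne (Fin.succ_ne_zero i)]
  · intro hx
    refine ⟨fun _ => x 0, ?_⟩
    funext i
    induction i using Fin.cases with
    | zero => simp
    | succ j =>
      have := congrFun hx j
      simp only [piMinus_apply, Pi.zero_apply] at this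
      simp [Pi.single_eq_of_ne (Fin.succ_ne_zero j), this.symm]

lemma ext_to_pair_zero {A : Type u} [AddCommGroup A] [Module k A]
    (f g : A →ₗ[k] ((Fin 0 → k) × (Fin 0 → k))) : f = g :=
  LinearMap.ext fun _x => Prod.ext (funext fun i => i.elim0) (funext fun i => i.elim0)

lemma ext_to_zero {A : Type u} [AddCommGroup A] [Module k A]
    (f g : A →ₗ[k] (Fin 0 → k)) : f = g :=
  LinearMap.ext fun _x => funext fun i => i.elim0

end SESAux

/-- The short exact sequences `0 → E₂^{m-1} → E₁^m → E₁⁰ ⊕ E₁⁰ → 0` (`m ≥ 1`),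
`0 → E₃^m → E₂^m → M → 0`, `0 → E₃^{m-1} → E₄^m → E₄⁰ ⊕ E₄⁰ → 0` (`m ≥ 1`) and
`0 → M → E₄^m → E₁^m → 0` in `Rep_k(Q1)`. -/
theorem statement_17 (k : Type u) [Field k] [IsAlgClosed k] :
    (∀ m : ℕ, 1 ≤ m →
      ∃ (f : RepQ1.Homo (E2 k (m - 1)) (E1 k m))
        (g : RepQ1.Homo (E1 k m) (RepQ1.dsum (E1 k 0) (E1 k 0))),
        RepQ1.IsSES f g) ∧
    (∀ m : ℕ,
      ∃ (f : RepQ1.Homo (E3 k m) (E2 k m)) (g : RepQ1.Homo (E2 k m) (Mrep k)),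
        RepQ1.IsSES f g) ∧
    (∀ m : ℕ, 1 ≤ m →
      ∃ (f : RepQ1.Homo (E3 k (m - 1)) (E4 k m))
        (g : RepQ1.Homo (E4 k m) (RepQ1.dsum (E4 k 0) (E4 k 0))),
        RepQ1.IsSES f g) ∧
    (∀ m : ℕ,
      ∃ (f : RepQ1.Homo (Mrep k) (E4 k m)) (g : RepQ1.Homo (E4 k m) (E1 k m)),
        RepQ1.IsSES f g) := by
  refine ⟨?_, ?_, ?_, ?_⟩
  · -- 0 → E₂^{m-1} → E₁^m → E₁⁰ ⊕ E₁⁰ → 0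
    intro m hm
    obtain ⟨n, rfl⟩ : ∃ n, m = n + 1 := ⟨m - 1, (Nat.succ_pred_eq_of_pos hm).symm⟩
    refine ⟨⟨embL k n, revL k (n+1), revL k (n+1),
        comm_plus k n, comm_minus k n, LinearMap.ext fun _ => rfl⟩,
      ⟨projEnds k n, 0, 0,
        ext_to_pair_zero k _ _, ext_to_pair_zero k _ _, ext_to_pair_zero k _ _⟩, ?_⟩
    refine ⟨embL_injective k n, revL_injective k (n+1), revL_injective k (n+1),
      projEnds_surjective k n,
      fun y => ⟨0, Prod.ext (funext fun i => i.elim0) (funext fun i => i.elim0)⟩,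
      fun y => ⟨0, Prod.ext (funext fun i => i.elim0) (funext fun i => i.elim0)⟩,
      range_embL k n, ?_, ?_⟩ <;>
    · have hker : LinearMap.ker
          (0 : (Fin (n+1) → k) →ₗ[k] (Fin 0 → k) × (Fin 0 → k)) = ⊤ :=
        LinearMap.ker_zero
      exact (range_revL k (n+1)).trans hker.symm
  · -- 0 → E₃^m → E₂^m → M → 0
    intro m
    refine ⟨⟨LinearMap.id, jMinus k m, LinearMap.id,
        LinearMap.ext fun _ => rfl, LinearMap.ext fun _ => rfl, LinearMap.ext fun _ => rfl⟩,
      ⟨0, cProj k (m+1) 0, 0,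
        ext_to_zero k _ _, LinearMap.ext fun x => funext fun j => by
          show cProj k (m+1) 0 (jMinus k m x) j = 0
          rfl, ext_to_zero k _ _⟩, ?_⟩
    have hker : LinearMap.ker (0 : (Fin m → k) →ₗ[k] (Fin 0 → k)) = ⊤ := LinearMap.ker_zero
    have hker' : LinearMap.ker (0 : (Fin (m+1) → k) →ₗ[k] (Fin 0 → k)) = ⊤ := LinearMap.ker_zero
    exact ⟨fun a b h => h, jMinus_injective k m, fun a b h => h,
      fun y => ⟨0, funext fun i => i.elim0⟩,
      cProj_surjective k (m+1) 0,
      fun y => ⟨0, funext fun i => i.elim0⟩,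
      LinearMap.range_id.trans hker.symm,
      range_jMinus k m,
      LinearMap.range_id.trans hker'.symm⟩
  · -- 0 → E₃^{m-1} → E₄^m → E₄⁰ ⊕ E₄⁰ → 0
    intro m hm
    obtain ⟨n, rfl⟩ : ∃ n, m = n + 1 := ⟨m - 1, (Nat.succ_pred_eq_of_pos hm).symm⟩
    refine ⟨⟨embL k n, embL k n, revL k (n+1),
        comm_plus k n, LinearMap.ext fun _ => rfl, comm_minus k n⟩,
      ⟨projEnds k n, projEnds k n, 0,
        ext_to_pair_zero k _ _, LinearMap.ext fun _ => rfl, ext_to_pair_zero k _ _⟩, ?_⟩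
    have hker : LinearMap.ker
        (0 : (Fin (n+1) → k) →ₗ[k] (Fin 0 → k) × (Fin 0 → k)) = ⊤ := LinearMap.ker_zero
    exact ⟨embL_injective k n, embL_injective k n, revL_injective k (n+1),
      projEnds_surjective k n, projEnds_surjective k n,
      fun y => ⟨0, Prod.ext (funext fun i => i.elim0) (funext fun i => i.elim0)⟩,
      range_embL k n, range_embL k n,
      (range_revL k (n+1)).trans hker.symm⟩
  · -- 0 → M → E₄^m → E₁^m → 0
    intro m
    refine ⟨⟨0, sing0 k m, 0,
        LinearMap.ext fun x => by simp only [LinearMap.comp_apply, LinearMap.zero_apply, map_zero],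
        LinearMap.ext fun x => (map_zero (sing0 k m)).trans (map_zero (E4 k m).r12).symm,
        LinearMap.ext fun x => (LinearMap.congr_fun (piMinus_sing0 k m) x).symm⟩,
      ⟨LinearMap.id, piMinus k m, LinearMap.id,
        LinearMap.ext fun _ => rfl, LinearMap.ext fun _ => rfl, LinearMap.ext fun _ => rfl⟩, ?_⟩
    · exact ⟨fun a b _ => funext fun i => i.elim0,
        sing0_injective k m,
        fun a b _ => funext fun i => i.elim0,
        fun y => ⟨y, rfl⟩, piMinus_surjective k m, fun y => ⟨y, rfl⟩,
        LinearMap.range_zero.trans LinearMap.ker_id.symm,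
        range_sing0 k m,
        LinearMap.range_zero.trans LinearMap.ker_id.symm⟩
end
end

section
/- Let 0 → A → C → B → 0 be a short exact sequence of representations of the quiver Q1 with A ≠ 0 and B ≠ 0. Then: if C ≅ E_2^0 then A ≅ E_3^0 and B ≅ M; if C ≅ E_4^0 then A ≅ M and B ≅ E_1^0; and if C ≅ M' then A ≅ E_3^0 and B ≅ E_1^0. -/
noncomputable section

open Module

universe u

variable (k : Type u) [Field k]

section Helpers

variable {k : Type u} [Field k]

lemma lmap_eq_dom {V W : Type u} [AddCommGroup V] [Module k V] [AddCommGroup W] [Module k W]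
    (h : Subsingleton V) (f g : V →ₗ[k] W) : f = g := by
  ext x
  rw [Subsingleton.elim x 0, map_zero, map_zero]

lemma lmap_eq_cod {V W : Type u} [AddCommGroup V] [Module k V] [AddCommGroup W] [Module k W]
    (h : Subsingleton W) (f g : V →ₗ[k] W) : f = g := by
  ext x
  exact Subsingleton.elim _ _

lemma iso_triv (ρ ρ' : RepQ1 k)
    (h1 : finrank k ρ.V1 = finrank k ρ'.V1)
    (h2 : finrank k ρ.V2 = finrank k ρ'.V2)
    (h3 : finrank k ρ.V3 = finrank k ρ'.V3)
    (s13 : Subsingleton ρ.V1 ∨ Subsingleton ρ'.V3)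
    (s12 : Subsingleton ρ.V1 ∨ Subsingleton ρ'.V2)
    (s23 : Subsingleton ρ.V2 ∨ Subsingleton ρ'.V3) : RepQ1.Iso ρ ρ' := by
  refine ⟨LinearEquiv.ofFinrankEq _ _ h1, LinearEquiv.ofFinrankEq _ _ h2,
    LinearEquiv.ofFinrankEq _ _ h3, ?_, ?_, ?_⟩
  · rcases s13 with h | h
    · exact lmap_eq_dom h _ _
    · exact lmap_eq_cod h _ _
  · rcases s12 with h | h
    · exact lmap_eq_dom h _ _
    · exact lmap_eq_cod h _ _
  · rcases s23 with h | h
    · exact lmap_eq_dom h _ _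
    · exact lmap_eq_cod h _ _

lemma ses_rank {VA VC VB : Type u} [AddCommGroup VA] [Module k VA] [FiniteDimensional k VA]
    [AddCommGroup VC] [Module k VC] [FiniteDimensional k VC]
    [AddCommGroup VB] [Module k VB] [FiniteDimensional k VB]
    (f : VA →ₗ[k] VC) (g : VC →ₗ[k] VB)
    (hf : Function.Injective f) (hg : Function.Surjective g)
    (h : LinearMap.range f = LinearMap.ker g) :
    finrank k VA + finrank k VB = finrank k VC := by
  have h1 := LinearMap.finrank_range_add_finrank_ker g
  rw [LinearMap.range_eq_top.mpr hg, finrank_top, ← h, LinearMap.finrank_range_of_inj hf] at h1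
  omega

lemma inj_of_square {U W TU TW : Type u} [AddCommGroup U] [Module k U]
    [AddCommGroup W] [Module k W] [AddCommGroup TU] [Module k TU]
    [AddCommGroup TW] [Module k TW]
    (rC : U →ₗ[k] W) (e2 : U ≃ₗ[k] TU) (e3 : W ≃ₗ[k] TW) (r' : TU →ₗ[k] TW)
    (hr' : Function.Injective r')
    (c : e3.toLinearMap ∘ₗ rC = r' ∘ₗ e2.toLinearMap) : Function.Injective rC := by
  intro a b hab
  apply e2.injective
  apply hr'
  have ha := DFunLike.congr_fun c a
  have hb := DFunLike.congr_fun c b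
  simp only [LinearMap.coe_comp, LinearEquiv.coe_coe, Function.comp_apply] at ha hb
  rw [← ha, ← hb, hab]

lemma ses_contra {U W U' W' : Type u} [AddCommGroup U] [Module k U]
    [AddCommGroup W] [Module k W] [AddCommGroup U'] [Module k U']
    [AddCommGroup W'] [Module k W']
    (fU : U →ₗ[k] U') (fW : W →ₗ[k] W') (rA : U →ₗ[k] W) (rC : U' →ₗ[k] W')
    (hfU : Function.Injective fU) (hrC : Function.Injective rC)
    (comm : fW ∘ₗ rA = rC ∘ₗ fU) (hW : Subsingleton W) (hU : Nontrivial U) : False := by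
  obtain ⟨x, hx⟩ := exists_ne (0 : U)
  apply hx
  apply hfU
  rw [map_zero]
  apply hrC
  rw [map_zero]
  have h := DFunLike.congr_fun comm x
  simp only [LinearMap.coe_comp, Function.comp_apply] at h
  rw [← h, Subsingleton.elim (rA x) 0, map_zero]

end Helpers

/-- The short exact sequences in `Rep_k(Q1)` with middle term `E₂⁰`, `E₄⁰` or `M'`
and nonzero outer terms are unique. -/
theorem statement_18 (k : Type u) [Field k] [IsAlgClosed k]
    (A C B : RepQ1 k) (f : RepQ1.Homo A C) (g : RepQ1.Homo C B)
    (hses : RepQ1.IsSES f g) (hA : ¬ A.IsZeroRep) (hB : ¬ B.IsZeroRep) :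
    (RepQ1.Iso C (E2 k 0) → RepQ1.Iso A (E3 k 0) ∧ RepQ1.Iso B (Mrep k)) ∧
    (RepQ1.Iso C (E4 k 0) → RepQ1.Iso A (Mrep k) ∧ RepQ1.Iso B (E1 k 0)) ∧
    (RepQ1.Iso C (Mprep k) → RepQ1.Iso A (E3 k 0) ∧ RepQ1.Iso B (E1 k 0)) := by
  classical
  obtain ⟨inj1, inj2, inj3, surj1, surj2, surj3, rg1, rg2, rg3⟩ := hses
  have d1 := ses_rank f.f1 g.f1 inj1 surj1 rg1
  have d2 := ses_rank f.f2 g.f2 inj2 surj2 rg2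
  have d3 := ses_rank f.f3 g.f3 inj3 surj3 rg3
  have hAnz : ¬ (finrank k A.V1 = 0 ∧ finrank k A.V2 = 0 ∧ finrank k A.V3 = 0) := by
    rintro ⟨h1, h2, h3⟩
    exact hA ⟨finrank_zero_iff.mp h1, finrank_zero_iff.mp h2, finrank_zero_iff.mp h3⟩
  have hBnz : ¬ (finrank k B.V1 = 0 ∧ finrank k B.V2 = 0 ∧ finrank k B.V3 = 0) := by
    rintro ⟨h1, h2, h3⟩
    exact hB ⟨finrank_zero_iff.mp h1, finrank_zero_iff.mp h2, finrank_zero_iff.mp h3⟩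
  refine ⟨?_, ?_, ?_⟩
  · -- C ≅ E₂⁰
    rintro ⟨e1, e2, e3, c13, c12, c23⟩
    have hc1 : finrank k C.V1 = 0 := by
      rw [e1.finrank_eq]; exact Module.finrank_fin_fun k
    have hc2 : finrank k C.V2 = 1 := by
      rw [e2.finrank_eq]; exact Module.finrank_fin_fun k
    have hc3 : finrank k C.V3 = 1 := by
      rw [e3.finrank_eq]; exact Module.finrank_fin_fun k
    have hrC : Function.Injective C.r23 :=
      inj_of_square C.r23 e2 e3 (E2 k 0).r23 (fun a b h => h) c23
    have hcase : (finrank k A.V2 = 1 ∧ finrank k A.V3 = 0) ∨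
        (finrank k A.V1 = 0 ∧ finrank k A.V2 = 0 ∧ finrank k A.V3 = 1 ∧
         finrank k B.V1 = 0 ∧ finrank k B.V2 = 1 ∧ finrank k B.V3 = 0) := by omega
    rcases hcase with ⟨ha2, ha3⟩ | ⟨ha1, ha2, ha3, hb1, hb2, hb3⟩
    · exact absurd (ses_contra f.f2 f.f3 A.r23 C.r23 inj2 hrC f.comm23
        (finrank_zero_iff.mp ha3) (nontrivial_of_finrank_pos (R := k) (by omega))) id
    · constructor
      · refine iso_triv A (E3 k 0) ?_ ?_ ?_ ?_ ?_ ?_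
        · rw [ha1]; exact (Module.finrank_fin_fun k).symm
        · rw [ha2]; exact (Module.finrank_fin_fun k).symm
        · rw [ha3]; exact (Module.finrank_fin_fun k).symm
        · exact Or.inl (finrank_zero_iff.mp ha1)
        · exact Or.inl (finrank_zero_iff.mp ha1)
        · exact Or.inl (finrank_zero_iff.mp ha2)
      · refine iso_triv B (Mrep k) ?_ ?_ ?_ ?_ ?_ ?_
        · rw [hb1]; exact (Module.finrank_fin_fun k).symm
        · rw [hb2]; exact (Module.finrank_fin_fun k).symm
        · rw [hb3]; exact (Module.finrank_fin_fun k).symm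
        · exact Or.inl (finrank_zero_iff.mp hb1)
        · exact Or.inl (finrank_zero_iff.mp hb1)
        · exact Or.inr (inferInstanceAs (Subsingleton (Fin 0 → k)))
  · -- C ≅ E₄⁰
    rintro ⟨e1, e2, e3, c13, c12, c23⟩
    have hc1 : finrank k C.V1 = 1 := by
      rw [e1.finrank_eq]; exact Module.finrank_fin_fun k
    have hc2 : finrank k C.V2 = 1 := by
      rw [e2.finrank_eq]; exact Module.finrank_fin_fun k
    have hc3 : finrank k C.V3 = 0 := by
      rw [e3.finrank_eq]; exact Module.finrank_fin_fun k
    have hrC : Function.Injective C.r12 :=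
      inj_of_square C.r12 e1 e2 (E4 k 0).r12 (fun a b h => h) c12
    have hcase : (finrank k A.V1 = 1 ∧ finrank k A.V2 = 0) ∨
        (finrank k A.V1 = 0 ∧ finrank k A.V2 = 1 ∧ finrank k A.V3 = 0 ∧
         finrank k B.V1 = 1 ∧ finrank k B.V2 = 0 ∧ finrank k B.V3 = 0) := by omega
    rcases hcase with ⟨ha1, ha2⟩ | ⟨ha1, ha2, ha3, hb1, hb2, hb3⟩
    · exact absurd (ses_contra f.f1 f.f2 A.r12 C.r12 inj1 hrC f.comm12
        (finrank_zero_iff.mp ha2) (nontrivial_of_finrank_pos (R := k) (by omega))) id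
    · constructor
      · refine iso_triv A (Mrep k) ?_ ?_ ?_ ?_ ?_ ?_
        · rw [ha1]; exact (Module.finrank_fin_fun k).symm
        · rw [ha2]; exact (Module.finrank_fin_fun k).symm
        · rw [ha3]; exact (Module.finrank_fin_fun k).symm
        · exact Or.inl (finrank_zero_iff.mp ha1)
        · exact Or.inl (finrank_zero_iff.mp ha1)
        · exact Or.inr (inferInstanceAs (Subsingleton (Fin 0 → k)))
      · refine iso_triv B (E1 k 0) ?_ ?_ ?_ ?_ ?_ ?_
        · rw [hb1]; exact (Module.finrank_fin_fun k).symm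
        · rw [hb2]; exact (Module.finrank_fin_fun k).symm
        · rw [hb3]; exact (Module.finrank_fin_fun k).symm
        · exact Or.inr (inferInstanceAs (Subsingleton (Fin 0 → k)))
        · exact Or.inr (inferInstanceAs (Subsingleton (Fin 0 → k)))
        · exact Or.inl (finrank_zero_iff.mp hb2)
  · -- C ≅ M'
    rintro ⟨e1, e2, e3, c13, c12, c23⟩
    have hc1 : finrank k C.V1 = 1 := by
      rw [e1.finrank_eq]; exact Module.finrank_fin_fun k
    have hc2 : finrank k C.V2 = 0 := by
      rw [e2.finrank_eq]; exact Module.finrank_fin_fun k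
    have hc3 : finrank k C.V3 = 1 := by
      rw [e3.finrank_eq]; exact Module.finrank_fin_fun k
    have hrC : Function.Injective C.r13 :=
      inj_of_square C.r13 e1 e3 (Mprep k).r13 (fun a b h => h) c13
    have hcase : (finrank k A.V1 = 1 ∧ finrank k A.V3 = 0) ∨
        (finrank k A.V1 = 0 ∧ finrank k A.V2 = 0 ∧ finrank k A.V3 = 1 ∧
         finrank k B.V1 = 1 ∧ finrank k B.V2 = 0 ∧ finrank k B.V3 = 0) := by omega
    rcases hcase with ⟨ha1, ha3⟩ | ⟨ha1, ha2, ha3, hb1, hb2, hb3⟩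
    · exact absurd (ses_contra f.f1 f.f3 A.r13 C.r13 inj1 hrC f.comm13
        (finrank_zero_iff.mp ha3) (nontrivial_of_finrank_pos (R := k) (by omega))) id
    · constructor
      · refine iso_triv A (E3 k 0) ?_ ?_ ?_ ?_ ?_ ?_
        · rw [ha1]; exact (Module.finrank_fin_fun k).symm
        · rw [ha2]; exact (Module.finrank_fin_fun k).symm
        · rw [ha3]; exact (Module.finrank_fin_fun k).symm
        · exact Or.inl (finrank_zero_iff.mp ha1)
        · exact Or.inl (finrank_zero_iff.mp ha1)
        · exact Or.inl (finrank_zero_iff.mp ha2)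
      · refine iso_triv B (E1 k 0) ?_ ?_ ?_ ?_ ?_ ?_
        · rw [hb1]; exact (Module.finrank_fin_fun k).symm
        · rw [hb2]; exact (Module.finrank_fin_fun k).symm
        · rw [hb3]; exact (Module.finrank_fin_fun k).symm
        · exact Or.inr (inferInstanceAs (Subsingleton (Fin 0 → k)))
        · exact Or.inr (inferInstanceAs (Subsingleton (Fin 0 → k)))
        · exact Or.inl (finrank_zero_iff.mp hb2)
end
end
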